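/- Let φ1, φ2, X1, X2 be positive reals with φ1·X2 > φ2·X1 and 0 < 1 − √(φ1·X1·X2/φ2) < X2 (interior of Case 2a). Define, for (b, v) near (0, 0) with X2 − b > 0, π1(b, v) = (1/2)·√((X1 + b)·(φ1 − v)·(φ2 + v)/(X2 − b)) and π2(b, v) = (φ2 + v)·(1 − 1/(2·(X2 − b))) + π1(b, v). Assume it is not the case that both X1 + X2 = 2·√(φ2·X1/(φ1·X2)) and (2 − 4·X2)·√(φ1·φ2) = (φ1 − φ2)·√(X1·X2) (i.e., the gradient of π2 at (0,0) is nonzero), and assume φ1·(1 − 2·X2)·(X1 + X2) ≠ X1·(φ1 − φ2) (the gradients of π1 and π2 at (0,0) are not diametrically opposed). Then for every ε > 0 there exists a pair (b, v) with |b| < ε, |v| < ε, and X2 − b > 0 such that π1(b, v) > π1(0, 0) and π2(b, v) > π2(0, 0). (Proposition 20: existence of mutually beneficial joint transfers in the interior of Case 2.) -/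

import Mathlib

open Filter Topology

private lemma incr_of_deriv_one {f : ℝ → ℝ} (h : HasDerivAt f 1 0) :
    ∀ᶠ t in 𝓝[>] (0:ℝ), f 0 < f t := by
  have hs := hasDerivAt_iff_tendsto_slope.mp h
  have h1 : ∀ᶠ t in 𝓝[≠] (0:ℝ), 0 < slope f 0 t :=
    hs.eventually (eventually_gt_nhds one_pos)
  have h2 : 𝓝[>] (0:ℝ) ≤ 𝓝[≠] (0:ℝ) :=
    nhdsWithin_mono _ (fun x hx => ne_of_gt hx)
  filter_upwards [h1.filter_mono h2, self_mem_nhdsWithin] with t hslope ht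
  have ht' : (0:ℝ) < t := ht
  have hsl : 0 < (f t - f 0) / t := by simpa [slope_def_field] using hslope
  have := mul_pos hsl ht'
  rw [div_mul_cancel₀ _ ht'.ne'] at this
  linarith

theorem case2_joint_transfer (φ1 φ2 X1 X2 : ℝ)
    (hφ1 : 0 < φ1) (hφ2 : 0 < φ2) (hX1 : 0 < X1) (hX2 : 0 < X2)
    (hratio : φ1 * X2 > φ2 * X1)
    (hlo : 0 < 1 - Real.sqrt (φ1 * X1 * X2 / φ2))
    (hhi : 1 - Real.sqrt (φ1 * X1 * X2 / φ2) < X2)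
    (π1 π2 : ℝ → ℝ → ℝ)
    (hπ1 : ∀ b v, π1 b v =
      (1 / 2) * Real.sqrt ((X1 + b) * (φ1 - v) * (φ2 + v) / (X2 - b)))
    (hπ2 : ∀ b v, π2 b v =
      (φ2 + v) * (1 - 1 / (2 * (X2 - b))) + π1 b v)
    (hgrad : ¬ (X1 + X2 = 2 * Real.sqrt (φ2 * X1 / (φ1 * X2)) ∧
      (2 - 4 * X2) * Real.sqrt (φ1 * φ2) = (φ1 - φ2) * Real.sqrt (X1 * X2)))
    (hopp : φ1 * (1 - 2 * X2) * (X1 + X2) ≠ X1 * (φ1 - φ2)) :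
    ∀ ε > (0 : ℝ), ∃ b v : ℝ,
      |b| < ε ∧ |v| < ε ∧ X2 - b > 0 ∧
      π1 b v > π1 0 0 ∧ π2 b v > π2 0 0 := by
  intro ε hε
  -- basic quantities
  set s := Real.sqrt (X1*φ1*φ2/X2) with hs_def
  have hR0 : (0:ℝ) < X1*φ1*φ2/X2 := by positivity
  have hs : 0 < s := Real.sqrt_pos.mpr hR0
  have hs2 : s^2 = X1*φ1*φ2/X2 := Real.sq_sqrt hR0.le
  set K := s*(X1+X2)/(4*(X1*X2)) * (1 - 1/(2*X2))
      + s*(φ1-φ2)/(4*(φ1*φ2)) * (φ2/(2*X2^2)) with hK_def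
  have hbr : φ1*(X1+X2)*(2*X2-1) + X1*(φ1-φ2) ≠ 0 := by
    intro h
    exact hopp (by linear_combination -h)
  have hK : K ≠ 0 := by
    have hKeq : K = s * (φ1*(X1+X2)*(2*X2-1) + X1*(φ1-φ2)) / (8*(X1*X2^2*φ1)) := by
      rw [hK_def]; field_simp; ring
    rw [hKeq]
    exact div_ne_zero (mul_ne_zero hs.ne' hbr) (by positivity)
  set u := (1 - 1/(2*X2))/K with hu
  set w := (φ2/(2*X2^2))/K with hw
  have h4K : 8*K*(X1*X2^3*φ1*φ2)
      = s*((2*X2^2 - X2)*(X1+X2)*(φ1*φ2) + φ2*(φ1-φ2)*(X1*X2)) := by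
    rw [hK_def]; field_simp; ring
  -- elementary derivatives
  have h1 : HasDerivAt (fun t : ℝ => X1 + t*u) u 0 := by
    simpa using ((hasDerivAt_id (0:ℝ)).mul_const u).const_add X1
  have h2 : HasDerivAt (fun t : ℝ => φ1 - t*w) (-w) 0 := by
    simpa using ((hasDerivAt_id (0:ℝ)).mul_const w).const_sub φ1
  have h3 : HasDerivAt (fun t : ℝ => φ2 + t*w) w 0 := by
    simpa using ((hasDerivAt_id (0:ℝ)).mul_const w).const_add φ2
  have h4 : HasDerivAt (fun t : ℝ => X2 - t*u) (-u) 0 := by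
    simpa using ((hasDerivAt_id (0:ℝ)).mul_const u).const_sub X2
  have hden : X2 - 0*u ≠ 0 := by simpa using hX2.ne'
  have hr : HasDerivAt (fun t : ℝ => (X1+t*u)*(φ1-t*w)*(φ2+t*w)/(X2-t*u))
      ((X1*φ1*φ2/X2) * (u*(X1+X2)/(X1*X2) + w*(φ1-φ2)/(φ1*φ2))) 0 := by
    have h := ((h1.mul h2).mul h3).div h4 hden
    refine h.congr_deriv ?_
    simp only [Pi.mul_apply, zero_mul, add_zero, sub_zero]
    field_simp
    ring
  have hr0 : ((X1+0*u)*(φ1-0*w)*(φ2+0*w)/(X2-0*u)) = X1*φ1*φ2/X2 := by norm_num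
  have hne : (X1+0*u)*(φ1-0*w)*(φ2+0*w)/(X2-0*u) ≠ 0 := by rw [hr0]; exact hR0.ne'
  -- derivative of the π1 part is 1
  have hd1 : HasDerivAt
      (fun t : ℝ => (1/2) * Real.sqrt ((X1+t*u)*(φ1-t*w)*(φ2+t*w)/(X2-t*u))) 1 0 := by
    have h := (hr.sqrt hne).const_mul (1/2 : ℝ)
    refine h.congr_deriv ?_
    rw [hr0]
    have hsq : Real.sqrt (X1*φ1*φ2/X2) = s := hs_def.symm
    rw [hsq, hu, hw]
    field_simp
    have hs2X : s^2*X2 = X1*φ1*φ2 := by rw [hs2]; field_simp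
    apply mul_left_cancel₀ (mul_ne_zero hs.ne' hX2.ne')
    linear_combination (-1) * h4K - 8*X2^3*K*hs2X
  -- derivative of the extra π2 part is 0
  have hd0 : HasDerivAt (fun t : ℝ => (φ2 + t*w) * (1 - 1/(2*(X2 - t*u)))) 0 0 := by
    have h5 : HasDerivAt (fun t : ℝ => 2*(X2 - t*u)) (2*(-u)) 0 := h4.const_mul 2
    have hne2 : 2*(X2 - 0*u) ≠ 0 := by simp only [zero_mul, sub_zero]; positivity
    have h6 := ((h5.inv hne2).const_mul (1:ℝ)).const_sub (1:ℝ)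
    have h7 := h3.mul h6
    refine h7.congr_deriv ?_
    simp only [Pi.mul_apply, Pi.inv_apply]
    rw [hu, hw]
    field_simp
    ring
  have hd2 : HasDerivAt
      (fun t : ℝ => (φ2 + t*w) * (1 - 1/(2*(X2 - t*u)))
        + (1/2) * Real.sqrt ((X1+t*u)*(φ1-t*w)*(φ2+t*w)/(X2-t*u))) 1 0 := by
    exact (hd0.add hd1).congr_deriv (by simp)
  -- local strict increase along the ray
  have e1 := incr_of_deriv_one hd1
  have e2 := incr_of_deriv_one hd2
  have e3 : ∀ᶠ t in 𝓝[>] (0:ℝ), |t*u| < ε := by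
    apply nhdsWithin_le_nhds
    have hc : Continuous fun t : ℝ => |t*u| := (continuous_id.mul continuous_const).abs
    have h0 : Tendsto (fun t : ℝ => |t*u|) (𝓝 0) (𝓝 |0*u|) := hc.tendsto 0
    exact h0.eventually (eventually_lt_nhds (by simpa using hε))
  have e4 : ∀ᶠ t in 𝓝[>] (0:ℝ), |t*w| < ε := by
    apply nhdsWithin_le_nhds
    have hc : Continuous fun t : ℝ => |t*w| := (continuous_id.mul continuous_const).abs
    have h0 : Tendsto (fun t : ℝ => |t*w|) (𝓝 0) (𝓝 |0*w|) := hc.tendsto 0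
    exact h0.eventually (eventually_lt_nhds (by simpa using hε))
  have e5 : ∀ᶠ t in 𝓝[>] (0:ℝ), 0 < X2 - t*u := by
    apply nhdsWithin_le_nhds
    have hc : Continuous fun t : ℝ => X2 - t*u :=
      continuous_const.sub (continuous_id.mul continuous_const)
    have h0 : Tendsto (fun t : ℝ => X2 - t*u) (𝓝 0) (𝓝 (X2 - 0*u)) := hc.tendsto 0
    exact h0.eventually (eventually_gt_nhds (by simpa using hX2))
  obtain ⟨t, ht1, ht2, ht3, ht4, ht5⟩ := (e1.and (e2.and (e3.and (e4.and e5)))).exists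
  refine ⟨t*u, t*w, ht3, ht4, ht5, ?_, ?_⟩
  · rw [hπ1, hπ1]
    calc (1/2) * Real.sqrt ((X1 + 0) * (φ1 - 0) * (φ2 + 0) / (X2 - 0))
        = (1/2) * Real.sqrt ((X1+0*u)*(φ1-0*w)*(φ2+0*w)/(X2-0*u)) := by simp only [zero_mul, add_zero, sub_zero]
      _ < (1/2) * Real.sqrt ((X1+t*u)*(φ1-t*w)*(φ2+t*w)/(X2-t*u)) := ht1
  · rw [hπ2, hπ2, hπ1, hπ1]
    calc (φ2 + 0) * (1 - 1/(2*(X2 - 0)))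
          + (1/2) * Real.sqrt ((X1 + 0) * (φ1 - 0) * (φ2 + 0) / (X2 - 0))
        = (φ2 + 0*w) * (1 - 1/(2*(X2 - 0*u)))
          + (1/2) * Real.sqrt ((X1+0*u)*(φ1-0*w)*(φ2+0*w)/(X2-0*u)) := by simp only [zero_mul, add_zero, sub_zero]
      _ < (φ2 + t*w) * (1 - 1/(2*(X2 - t*u)))
          + (1/2) * Real.sqrt ((X1+t*u)*(φ1-t*w)*(φ2+t*w)/(X2-t*u)) := ht2
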